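/- There are exactly 14 quadruples (a₀,a₁,a₂,a₃) of positive integers with a₀ ≤ a₁ ≤ a₂ ≤ a₃, such that any three of the four integers are coprime (well-formedness), and each aᵢ divides a₀+a₁+a₂+a₃; namely (1,1,1,1), (1,1,1,3), (1,1,4,6), (1,2,2,5), (1,1,2,4), (1,3,4,4), (1,1,2,2), (2,3,3,4), (1,4,5,10), (1,2,6,9), (1,2,3,6), (1,3,8,12), (1,6,14,21), (2,3,10,15). -/
import Mathlib

set_option maxHeartbeats 1600000 in
lemma unit4 {k0 k1 k2 k3 : ℕ} (h2 : 2 ≤ k3) (h32 : k3 ≤ k2) (h21 : k2 ≤ k1) (h10 : k1 ≤ k0)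
    (key : k1*k2*k3 + k0*k2*k3 + k0*k1*k3 + k0*k1*k2 = k0*k1*k2*k3) :
    (k0,k1,k2,k3) = (42,7,3,2) ∨ (k0,k1,k2,k3) = (24,8,3,2) ∨ (k0,k1,k2,k3) = (18,9,3,2) ∨
    (k0,k1,k2,k3) = (15,10,3,2) ∨ (k0,k1,k2,k3) = (12,12,3,2) ∨ (k0,k1,k2,k3) = (20,5,4,2) ∨
    (k0,k1,k2,k3) = (12,6,4,2) ∨ (k0,k1,k2,k3) = (8,8,4,2) ∨ (k0,k1,k2,k3) = (10,5,5,2) ∨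
    (k0,k1,k2,k3) = (6,6,6,2) ∨ (k0,k1,k2,k3) = (12,4,3,3) ∨ (k0,k1,k2,k3) = (6,6,3,3) ∨
    (k0,k1,k2,k3) = (6,4,4,3) ∨ (k0,k1,k2,k3) = (4,4,4,4) := by
  simp only [Prod.mk.injEq]
  have h30 : k3 ≤ k0 := le_trans h32 (le_trans h21 h10)
  have h31 : k3 ≤ k1 := le_trans h32 h21
  have h20 : k2 ≤ k0 := le_trans h21 h10
  have hp0 : 0 < k0 := by omega
  have hq : 0 < k0*k1 := Nat.mul_pos (by omega) (by omega)
  have hb3 : k3 ≤ 4 := by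
    have f1 : k3*(k1*k2) ≤ k0*(k1*k2) := Nat.mul_le_mul_right _ h30
    have f2 : k3*(k0*k2) ≤ k1*(k0*k2) := Nat.mul_le_mul_right _ h31
    have f3 : k3*(k0*k1) ≤ k2*(k0*k1) := Nat.mul_le_mul_right _ h32
    have hp : 0 < k0*(k1*k2) := Nat.mul_pos (by omega) (Nat.mul_pos (by omega) (by omega))
    nlinarith [key, f1, f2, f3, hp]
  have q1 : k1*k2 ≤ k1*k0 := Nat.mul_le_mul_left _ h20
  have q2 : k0*k2 ≤ k0*k1 := Nat.mul_le_mul_left _ h21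
  interval_cases k3
  · -- k3 = 2
    have hb2 : k2 ≤ 6 := by nlinarith [key, q1, q2, hq]
    clear h30 h31 h20 hb3 q1 q2
    interval_cases k2
    · exact absurd key (by clear h2 h32 h21; nlinarith [hq])
    · have hb1 : k1 ≤ 12 := by nlinarith [key, h10, hp0]
      clear hq hp0 hb2 h2 h32
      interval_cases k1
      · exact absurd key (by omega)
      · exact absurd key (by omega)
      · exact absurd key (by omega)
      · exact absurd key (by omega)
      · have : k0 = 42 := by omega
        subst this; norm_num
      · have : k0 = 24 := by omega
        subst this; norm_num
      · have : k0 = 18 := by omega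
        subst this; norm_num
      · have : k0 = 15 := by omega
        subst this; norm_num
      · exact absurd key (by omega)
      · have : k0 = 12 := by omega
        subst this; norm_num
    · have hb1 : k1 ≤ 8 := by nlinarith [key, h10, hp0]
      clear hq hp0 hb2 h2 h32
      interval_cases k1
      · exact absurd key (by omega)
      · have : k0 = 20 := by omega
        subst this; norm_num
      · have : k0 = 12 := by omega
        subst this; norm_num
      · exact absurd key (by omega)
      · have : k0 = 8 := by omega
        subst this; norm_num
    · have hb1 : k1 ≤ 6 := by nlinarith [key, h10, hp0]
      clear hq hp0 hb2 h2 h32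
      interval_cases k1
      · have : k0 = 10 := by omega
        subst this; norm_num
      · exact absurd key (by omega)
    · have hb1 : k1 ≤ 6 := by nlinarith [key, h10, hp0]
      clear hq hp0 hb2 h2 h32
      have : k1 = 6 := by omega
      subst this
      have : k0 = 6 := by omega
      subst this; norm_num
  · -- k3 = 3
    have hb2 : k2 ≤ 4 := by nlinarith [key, q1, q2, hq]
    clear h30 h31 h20 hb3 q1 q2
    interval_cases k2
    · have hb1 : k1 ≤ 6 := by nlinarith [key, h10, hp0]
      clear hq hp0 hb2 h2 h32
      interval_cases k1
      · exact absurd key (by omega)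
      · have : k0 = 12 := by omega
        subst this; norm_num
      · exact absurd key (by omega)
      · have : k0 = 6 := by omega
        subst this; norm_num
    · have hb1 : k1 ≤ 4 := by nlinarith [key, h10, hp0]
      clear hq hp0 hb2 h2 h32
      have : k1 = 4 := by omega
      subst this
      have : k0 = 6 := by omega
      subst this; norm_num
  · -- k3 = 4
    have hb2 : k2 ≤ 4 := by nlinarith [key, q1, q2, hq]
    have hk2 : k2 = 4 := by omega
    subst hk2
    have hb1 : k1 ≤ 4 := by nlinarith [key, h10, hp0]
    have hk1 : k1 = 4 := by omega
    subst hk1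
    have : k0 = 4 := by omega
    subst this; norm_num


set_option maxHeartbeats 1600000 in
/-- Classification of the 14 Gorenstein weighted projective 3-space weight
quadruples: sorted quadruples of positive integers, well-formed (any three
coprime), each weight dividing the sum. -/
theorem gorenstein_wps_classification :
    {q : ℕ × ℕ × ℕ × ℕ |
      0 < q.1 ∧ q.1 ≤ q.2.1 ∧ q.2.1 ≤ q.2.2.1 ∧ q.2.2.1 ≤ q.2.2.2 ∧
      Nat.gcd (Nat.gcd q.1 q.2.1) q.2.2.1 = 1 ∧
      Nat.gcd (Nat.gcd q.1 q.2.1) q.2.2.2 = 1 ∧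
      Nat.gcd (Nat.gcd q.1 q.2.2.1) q.2.2.2 = 1 ∧
      Nat.gcd (Nat.gcd q.2.1 q.2.2.1) q.2.2.2 = 1 ∧
      q.1 ∣ (q.1 + q.2.1 + q.2.2.1 + q.2.2.2) ∧
      q.2.1 ∣ (q.1 + q.2.1 + q.2.2.1 + q.2.2.2) ∧
      q.2.2.1 ∣ (q.1 + q.2.1 + q.2.2.1 + q.2.2.2) ∧
      q.2.2.2 ∣ (q.1 + q.2.1 + q.2.2.1 + q.2.2.2)} =
    {(1,1,1,1), (1,1,1,3), (1,1,4,6), (1,2,2,5), (1,1,2,4), (1,3,4,4),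
     (1,1,2,2), (2,3,3,4), (1,4,5,10), (1,2,6,9), (1,2,3,6), (1,3,8,12),
     (1,6,14,21), (2,3,10,15)} := by
  ext ⟨a, b, c, d⟩
  simp only [Set.mem_setOf_eq, Set.mem_insert_iff, Set.mem_singleton_iff, Prod.mk.injEq]
  constructor
  · rintro ⟨ha, hab, hbc, hcd, g1, g2, g3, g4, ⟨k0, hk0⟩, ⟨k1, hk1⟩, ⟨k2, hk2⟩, ⟨k3, hk3⟩⟩
    have hb0 : 0 < b := by omega
    have hc0 : 0 < c := by omega
    have hd0 : 0 < d := by omega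
    have e10 : a*k0 = b*k1 := by linarith
    have e21 : b*k1 = c*k2 := by linarith
    have e32 : c*k2 = d*k3 := by linarith
    have hk3two : 2 ≤ k3 := by
      rcases Nat.lt_or_ge k3 2 with hlt | hge
      · interval_cases k3 <;> omega
      · exact hge
    have h32 : k3 ≤ k2 := by nlinarith [e32, Nat.mul_le_mul_right k2 hcd, hd0]
    have h21 : k2 ≤ k1 := by nlinarith [e21, Nat.mul_le_mul_right k1 hbc, hc0]
    have h10 : k1 ≤ k0 := by nlinarith [e10, Nat.mul_le_mul_right k0 hab, hb0]
    have key : k1*k2*k3 + k0*k2*k3 + k0*k1*k3 + k0*k1*k2 = k0*k1*k2*k3 := by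
      have expand : (a*k0)*(k1*k2*k3) + (b*k1)*(k0*k2*k3) + (c*k2)*(k0*k1*k3) + (d*k3)*(k0*k1*k2)
          = (a+b+c+d)*(k0*k1*k2*k3) := by ring
      rw [← hk0, ← hk1, ← hk2, ← hk3] at expand
      have hS : 0 < a+b+c+d := by omega
      refine Nat.eq_of_mul_eq_mul_left hS ?_
      rw [Nat.mul_add, Nat.mul_add, Nat.mul_add]
      exact expand
    rcases unit4 hk3two h32 h21 h10 key with h|h|h|h|h|h|h|h|h|h|h|h|h|h
    · -- k = (42,7,3,2)
      simp only [Prod.mk.injEq] at h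
      obtain ⟨rfl, rfl, rfl, rfl⟩ := h
      have hdv : a ∣ Nat.gcd (Nat.gcd a b) c := Nat.dvd_gcd (Nat.dvd_gcd dvd_rfl ⟨6, by omega⟩) ⟨14, by omega⟩
      rw [g1] at hdv
      have ha1 : a = 1 := Nat.dvd_one.mp hdv
      subst ha1
      have hb1 : b = 6 := by omega
      have hc1 : c = 14 := by omega
      have hd1 : d = 21 := by omega
      subst hb1; subst hc1; subst hd1
      norm_num
    · -- k = (24,8,3,2)
      simp only [Prod.mk.injEq] at h
      obtain ⟨rfl, rfl, rfl, rfl⟩ := h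
      have hdv : a ∣ Nat.gcd (Nat.gcd a b) c := Nat.dvd_gcd (Nat.dvd_gcd dvd_rfl ⟨3, by omega⟩) ⟨8, by omega⟩
      rw [g1] at hdv
      have ha1 : a = 1 := Nat.dvd_one.mp hdv
      subst ha1
      have hb1 : b = 3 := by omega
      have hc1 : c = 8 := by omega
      have hd1 : d = 12 := by omega
      subst hb1; subst hc1; subst hd1
      norm_num
    · -- k = (18,9,3,2)
      simp only [Prod.mk.injEq] at h
      obtain ⟨rfl, rfl, rfl, rfl⟩ := h
      have hdv : a ∣ Nat.gcd (Nat.gcd a b) c := Nat.dvd_gcd (Nat.dvd_gcd dvd_rfl ⟨2, by omega⟩) ⟨6, by omega⟩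
      rw [g1] at hdv
      have ha1 : a = 1 := Nat.dvd_one.mp hdv
      subst ha1
      have hb1 : b = 2 := by omega
      have hc1 : c = 6 := by omega
      have hd1 : d = 9 := by omega
      subst hb1; subst hc1; subst hd1
      norm_num
    · -- k = (15,10,3,2)
      simp only [Prod.mk.injEq] at h
      obtain ⟨rfl, rfl, rfl, rfl⟩ := h
      obtain ⟨t, rfl⟩ : ∃ t, a = 2*t := ⟨a/2, by omega⟩
      have hdv : t ∣ Nat.gcd (Nat.gcd (2*t) b) c := Nat.dvd_gcd (Nat.dvd_gcd ⟨2, by ring⟩ ⟨3, by omega⟩) ⟨10, by omega⟩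
      rw [g1] at hdv
      have ha1 : t = 1 := Nat.dvd_one.mp hdv
      subst ha1
      have hb1 : b = 3 := by omega
      have hc1 : c = 10 := by omega
      have hd1 : d = 15 := by omega
      subst hb1; subst hc1; subst hd1
      norm_num
    · -- k = (12,12,3,2)
      simp only [Prod.mk.injEq] at h
      obtain ⟨rfl, rfl, rfl, rfl⟩ := h
      have hdv : a ∣ Nat.gcd (Nat.gcd a b) c := Nat.dvd_gcd (Nat.dvd_gcd dvd_rfl ⟨1, by omega⟩) ⟨4, by omega⟩
      rw [g1] at hdv
      have ha1 : a = 1 := Nat.dvd_one.mp hdv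
      subst ha1
      have hb1 : b = 1 := by omega
      have hc1 : c = 4 := by omega
      have hd1 : d = 6 := by omega
      subst hb1; subst hc1; subst hd1
      norm_num
    · -- k = (20,5,4,2)
      simp only [Prod.mk.injEq] at h
      obtain ⟨rfl, rfl, rfl, rfl⟩ := h
      have hdv : a ∣ Nat.gcd (Nat.gcd a b) c := Nat.dvd_gcd (Nat.dvd_gcd dvd_rfl ⟨4, by omega⟩) ⟨5, by omega⟩
      rw [g1] at hdv
      have ha1 : a = 1 := Nat.dvd_one.mp hdv
      subst ha1
      have hb1 : b = 4 := by omega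
      have hc1 : c = 5 := by omega
      have hd1 : d = 10 := by omega
      subst hb1; subst hc1; subst hd1
      norm_num
    · -- k = (12,6,4,2)
      simp only [Prod.mk.injEq] at h
      obtain ⟨rfl, rfl, rfl, rfl⟩ := h
      have hdv : a ∣ Nat.gcd (Nat.gcd a b) c := Nat.dvd_gcd (Nat.dvd_gcd dvd_rfl ⟨2, by omega⟩) ⟨3, by omega⟩
      rw [g1] at hdv
      have ha1 : a = 1 := Nat.dvd_one.mp hdv
      subst ha1
      have hb1 : b = 2 := by omega
      have hc1 : c = 3 := by omega
      have hd1 : d = 6 := by omega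
      subst hb1; subst hc1; subst hd1
      norm_num
    · -- k = (8,8,4,2)
      simp only [Prod.mk.injEq] at h
      obtain ⟨rfl, rfl, rfl, rfl⟩ := h
      have hdv : a ∣ Nat.gcd (Nat.gcd a b) c := Nat.dvd_gcd (Nat.dvd_gcd dvd_rfl ⟨1, by omega⟩) ⟨2, by omega⟩
      rw [g1] at hdv
      have ha1 : a = 1 := Nat.dvd_one.mp hdv
      subst ha1
      have hb1 : b = 1 := by omega
      have hc1 : c = 2 := by omega
      have hd1 : d = 4 := by omega
      subst hb1; subst hc1; subst hd1
      norm_num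
    · -- k = (10,5,5,2)
      simp only [Prod.mk.injEq] at h
      obtain ⟨rfl, rfl, rfl, rfl⟩ := h
      have hdv : a ∣ Nat.gcd (Nat.gcd a b) c := Nat.dvd_gcd (Nat.dvd_gcd dvd_rfl ⟨2, by omega⟩) ⟨2, by omega⟩
      rw [g1] at hdv
      have ha1 : a = 1 := Nat.dvd_one.mp hdv
      subst ha1
      have hb1 : b = 2 := by omega
      have hc1 : c = 2 := by omega
      have hd1 : d = 5 := by omega
      subst hb1; subst hc1; subst hd1
      norm_num
    · -- k = (6,6,6,2)
      simp only [Prod.mk.injEq] at h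
      obtain ⟨rfl, rfl, rfl, rfl⟩ := h
      have hdv : a ∣ Nat.gcd (Nat.gcd a b) c := Nat.dvd_gcd (Nat.dvd_gcd dvd_rfl ⟨1, by omega⟩) ⟨1, by omega⟩
      rw [g1] at hdv
      have ha1 : a = 1 := Nat.dvd_one.mp hdv
      subst ha1
      have hb1 : b = 1 := by omega
      have hc1 : c = 1 := by omega
      have hd1 : d = 3 := by omega
      subst hb1; subst hc1; subst hd1
      norm_num
    · -- k = (12,4,3,3)
      simp only [Prod.mk.injEq] at h
      obtain ⟨rfl, rfl, rfl, rfl⟩ := h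
      have hdv : a ∣ Nat.gcd (Nat.gcd a b) c := Nat.dvd_gcd (Nat.dvd_gcd dvd_rfl ⟨3, by omega⟩) ⟨4, by omega⟩
      rw [g1] at hdv
      have ha1 : a = 1 := Nat.dvd_one.mp hdv
      subst ha1
      have hb1 : b = 3 := by omega
      have hc1 : c = 4 := by omega
      have hd1 : d = 4 := by omega
      subst hb1; subst hc1; subst hd1
      norm_num
    · -- k = (6,6,3,3)
      simp only [Prod.mk.injEq] at h
      obtain ⟨rfl, rfl, rfl, rfl⟩ := h
      have hdv : a ∣ Nat.gcd (Nat.gcd a b) c := Nat.dvd_gcd (Nat.dvd_gcd dvd_rfl ⟨1, by omega⟩) ⟨2, by omega⟩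
      rw [g1] at hdv
      have ha1 : a = 1 := Nat.dvd_one.mp hdv
      subst ha1
      have hb1 : b = 1 := by omega
      have hc1 : c = 2 := by omega
      have hd1 : d = 2 := by omega
      subst hb1; subst hc1; subst hd1
      norm_num
    · -- k = (6,4,4,3)
      simp only [Prod.mk.injEq] at h
      obtain ⟨rfl, rfl, rfl, rfl⟩ := h
      obtain ⟨t, rfl⟩ : ∃ t, a = 2*t := ⟨a/2, by omega⟩
      have hdv : t ∣ Nat.gcd (Nat.gcd (2*t) b) c := Nat.dvd_gcd (Nat.dvd_gcd ⟨2, by ring⟩ ⟨3, by omega⟩) ⟨3, by omega⟩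
      rw [g1] at hdv
      have ha1 : t = 1 := Nat.dvd_one.mp hdv
      subst ha1
      have hb1 : b = 3 := by omega
      have hc1 : c = 3 := by omega
      have hd1 : d = 4 := by omega
      subst hb1; subst hc1; subst hd1
      norm_num
    · -- k = (4,4,4,4)
      simp only [Prod.mk.injEq] at h
      obtain ⟨rfl, rfl, rfl, rfl⟩ := h
      have hdv : a ∣ Nat.gcd (Nat.gcd a b) c := Nat.dvd_gcd (Nat.dvd_gcd dvd_rfl ⟨1, by omega⟩) ⟨1, by omega⟩
      rw [g1] at hdv
      have ha1 : a = 1 := Nat.dvd_one.mp hdv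
      subst ha1
      have hb1 : b = 1 := by omega
      have hc1 : c = 1 := by omega
      have hd1 : d = 1 := by omega
      subst hb1; subst hc1; subst hd1
      norm_num
  · rintro (⟨rfl,rfl,rfl,rfl⟩|⟨rfl,rfl,rfl,rfl⟩|⟨rfl,rfl,rfl,rfl⟩|⟨rfl,rfl,rfl,rfl⟩|⟨rfl,rfl,rfl,rfl⟩|⟨rfl,rfl,rfl,rfl⟩|⟨rfl,rfl,rfl,rfl⟩|⟨rfl,rfl,rfl,rfl⟩|⟨rfl,rfl,rfl,rfl⟩|⟨rfl,rfl,rfl,rfl⟩|⟨rfl,rfl,rfl,rfl⟩|⟨rfl,rfl,rfl,rfl⟩|⟨rfl,rfl,rfl,rfl⟩|⟨rfl,rfl,rfl,rfl⟩) <;>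
      refine ⟨by norm_num, by norm_num, by norm_num, by norm_num, by decide, by decide, by decide, by decide, by decide, by decide, by decide, by decide⟩
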